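/- Let N, l, s be natural numbers with N ≥ (s+1)l, and let M = (M₁,...,Mₛ) be a tuple of N×N complex matrices, each symmetric or skew-symmetric, such that there is a subspace V ⊆ ℂᴺ of dimension 2ˢl with dim(M₁V + ... + MₛV) = s·2ˢl. Then there exists g ∈ GL_N(ℂ) such that for each i, the matrix gMᵢgᵀ has its upper-left l×l block equal to zero and, writing gMᵢgᵀ in block rows of heights l, l, ..., l (s+1 blocks) and N−(s+1)l, the first l columns of gMᵢgᵀ consist of the block column (0_l, δ_{1,i}Id_l, δ_{2,i}Id_l, ..., δ_{s,i}Id_l, 0). -/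

import Mathlib

open Matrix

open Module

lemma exists_fam {K : Type*} [Field K] {E : Type*} [AddCommGroup E] [Module K E]
    [FiniteDimensional K E] {n : ℕ} (p : Submodule K E) (h : finrank K p = n) :
    ∃ f : Fin n → E, LinearIndependent K f ∧ (∀ j, f j ∈ p) ∧
      Submodule.span K (Set.range f) = p := by
  let b : Basis (Fin n) K p := Module.finBasisOfFinrankEq K p h
  refine ⟨fun j => (b j : E), ?_, fun j => (b j).2, ?_⟩
  · exact b.linearIndependent.map' p.subtype p.ker_subtype
  · have : Set.range (fun j => (b j : E)) = p.subtype '' Set.range b := by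
      ext x; simp
    rw [this, Submodule.span_image, b.span_eq, Submodule.map_top, Submodule.range_subtype]

lemma exists_le_finrank {K : Type*} [Field K] {E : Type*} [AddCommGroup E] [Module K E]
    [FiniteDimensional K E] (p : Submodule K E) (m : ℕ) (h : m ≤ finrank K p) :
    ∃ q : Submodule K E, q ≤ p ∧ finrank K q = m := by
  obtain ⟨f, hf, hfp, hsp⟩ := exists_fam p rfl
  refine ⟨Submodule.span K (Set.range (f ∘ Fin.castLE h)), ?_, ?_⟩
  · refine le_trans (Submodule.span_mono ?_) (le_of_eq hsp)
    rintro x ⟨j, rfl⟩; exact ⟨Fin.castLE h j, rfl⟩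
  · rw [finrank_span_eq_card (hf.comp _ (Fin.castLE_injective h))]
    simp

lemma exists_compl_within {K : Type*} [Field K] {E : Type*} [AddCommGroup E] [Module K E]
    {W Kk : Submodule K E} (h : W ≤ Kk) :
    ∃ C : Submodule K E, C ≤ Kk ∧ W ⊓ C = ⊥ ∧ W ⊔ C = Kk := by
  obtain ⟨C', hC'⟩ := Submodule.exists_isCompl (W.comap Kk.subtype)
  refine ⟨C'.map Kk.subtype, Submodule.map_subtype_le _ _, ?_, ?_⟩
  · have hW : W = (W.comap Kk.subtype).map Kk.subtype := by
      rw [Submodule.map_comap_subtype, inf_eq_right.2 h]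
    rw [hW, ← Submodule.map_inf _ (Submodule.injective_subtype Kk), hC'.inf_eq_bot,
      Submodule.map_bot]
  · have hW : W = (W.comap Kk.subtype).map Kk.subtype := by
      rw [Submodule.map_comap_subtype, inf_eq_right.2 h]
    rw [hW, ← Submodule.map_sup, hC'.sup_eq_top, Submodule.map_top, Submodule.range_subtype]
open Matrix Module

-- B(x,y) = x ⬝ᵥ M *ᵥ y ; transpose identity
lemma dot_mulVec_swap {N : ℕ} (A : Matrix (Fin N) (Fin N) ℂ) (x y : Fin N → ℂ) :
    x ⬝ᵥ Aᵀ *ᵥ y = y ⬝ᵥ A *ᵥ x := by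
  rw [Matrix.mulVec_transpose, dotProduct_comm, ← Matrix.dotProduct_mulVec]

lemma swap_zero {N : ℕ} {A : Matrix (Fin N) (Fin N) ℂ} (hA : Aᵀ = A ∨ Aᵀ = -A)
    {x y : Fin N → ℂ} (h : x ⬝ᵥ A *ᵥ y = 0) : y ⬝ᵥ A *ᵥ x = 0 := by
  rcases hA with hA | hA
  · rw [← dot_mulVec_swap, hA]; exact h
  · have := dot_mulVec_swap A y x
    rw [hA] at this
    simp only [Matrix.neg_mulVec, dotProduct_neg] at this
    linear_combination -this - h

-- self-isotropy in the skew case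
lemma skew_self {N : ℕ} {A : Matrix (Fin N) (Fin N) ℂ} (hA : Aᵀ = -A) (x : Fin N → ℂ) :
    x ⬝ᵥ A *ᵥ x = 0 := by
  have h1 : x ⬝ᵥ Aᵀ *ᵥ x = x ⬝ᵥ A *ᵥ x := dot_mulVec_swap A x x
  rw [hA] at h1
  simp only [Matrix.neg_mulVec, dotProduct_neg] at h1
  linear_combination -h1 / 2

lemma exists_isotropic_vec {N : ℕ} (A : Matrix (Fin N) (Fin N) ℂ) (hA : Aᵀ = A ∨ Aᵀ = -A)
    (V : Submodule ℂ (Fin N → ℂ)) (h2 : 2 ≤ finrank ℂ V) :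
    ∃ v ∈ V, v ≠ 0 ∧ v ⬝ᵥ A *ᵥ v = 0 := by
  rcases hA with hA | hA
  · -- symmetric case
    obtain ⟨q, hqV, hq2⟩ := exists_le_finrank V 2 h2
    obtain ⟨f, hf, hfq, -⟩ := exists_fam q hq2
    set u₁ := f 0
    set u₂ := f 1
    have hpair : ∀ x : ℂ, x • u₁ + u₂ ≠ 0 := by
      intro x hx
      have := (Fintype.linearIndependent_iff.1 hf) ![x, 1] (by
        rw [Fin.sum_univ_two]; simpa using hx) 1
      simp at this
    by_cases hq1 : u₁ ⬝ᵥ A *ᵥ u₁ = 0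
    · exact ⟨u₁, hqV (hfq 0), hf.ne_zero 0, hq1⟩
    · set q1 := u₁ ⬝ᵥ A *ᵥ u₁ with hq1def
      set b := u₁ ⬝ᵥ A *ᵥ u₂ + u₂ ⬝ᵥ A *ᵥ u₁ with hbdef
      set c := u₂ ⬝ᵥ A *ᵥ u₂ with hcdef
      obtain ⟨d, hd⟩ := IsAlgClosed.exists_pow_nat_eq (k := ℂ) (b ^ 2 - 4 * q1 * c) two_pos
      set x := (-b + d) / (2 * q1) with hxdef
      refine ⟨x • u₁ + u₂, V.add_mem (V.smul_mem _ (hqV (hfq 0))) (hqV (hfq 1)), hpair x, ?_⟩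
      have expand : (x • u₁ + u₂) ⬝ᵥ A *ᵥ (x • u₁ + u₂) = x * x * q1 + x * b + c := by
        simp only [add_dotProduct, smul_dotProduct, dotProduct_add, dotProduct_smul,
          Matrix.mulVec_add, Matrix.mulVec_smul, hq1def, hbdef, hcdef, smul_eq_mul]
        ring
      have h2q1 : (2 : ℂ) * q1 ≠ 0 := by
        simp [hq1]
      have hx2 : x * (2 * q1) = -b + d := by
        rw [hxdef]; exact div_mul_cancel₀ _ h2q1
      rw [expand]
      have hz : (x * x * q1 + x * b + c) * (4 * q1) = 0 := by
        linear_combination (2 * q1 * x + b + d) * hx2 + hd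
      rcases mul_eq_zero.1 hz with h | h
      · exact h
      · exfalso; apply hq1; field_simp at h
        exact (mul_eq_zero.1 h).resolve_left (by norm_num)
  · -- skew case: any nonzero vector works
    have hVne : V ≠ ⊥ := by
      intro hbot
      rw [hbot] at h2
      simp [finrank_bot] at h2
    obtain ⟨v, hvV, hv0⟩ := Submodule.exists_mem_ne_zero_of_ne_bot hVne
    exact ⟨v, hvV, hv0, skew_self hA v⟩

lemma iso1 {N : ℕ} (A : Matrix (Fin N) (Fin N) ℂ) (hA : Aᵀ = A ∨ Aᵀ = -A) :
    ∀ (m : ℕ) (V : Submodule ℂ (Fin N → ℂ)), finrank ℂ V = 2 * m →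
    ∃ V', V' ≤ V ∧ finrank ℂ V' = m ∧ ∀ x ∈ V', ∀ y ∈ V', x ⬝ᵥ A *ᵥ y = 0 := by
  intro m
  induction m with
  | zero =>
    intro V _
    exact ⟨⊥, bot_le, finrank_bot ℂ _, by simp⟩
  | succ m ih =>
    intro V hV
    obtain ⟨v, hvV, hv0, hq0⟩ := exists_isotropic_vec A hA V (by omega)
    set φ : (Fin N → ℂ) →ₗ[ℂ] ℂ :=
      { toFun := fun x => v ⬝ᵥ A *ᵥ x
        map_add' := by intro a b; simp [Matrix.mulVec_add, dotProduct_add]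
        map_smul' := by intro r a; simp [Matrix.mulVec_smul, dotProduct_smul] } with hφdef
    set V₁ := V ⊓ LinearMap.ker φ with hV₁def
    have hvV₁ : v ∈ V₁ := ⟨hvV, by simpa [hφdef] using hq0⟩
    have hV₁rank : 2 * m + 1 ≤ finrank ℂ V₁ := by
      have e1 := Submodule.finrank_sup_add_finrank_inf_eq V (LinearMap.ker φ)
      rw [← hV₁def] at e1
      have e2 := LinearMap.finrank_range_add_finrank_ker φ
      have e3 : finrank ℂ (LinearMap.range φ) ≤ 1 := by
        simpa using Submodule.finrank_le (LinearMap.range φ)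
      have e5 : finrank ℂ (Fin N → ℂ) = N := by simp
      have e4 := Submodule.finrank_le (V ⊔ LinearMap.ker φ)
      omega
    have hsvle : Submodule.span ℂ {v} ≤ V₁ := by
      rw [Submodule.span_le, Set.singleton_subset_iff]; exact hvV₁
    obtain ⟨D, hDV₁, hDinf, hDsup⟩ := exists_compl_within hsvle
    have hDrank : 2 * m ≤ finrank ℂ D := by
      have e1 := Submodule.finrank_sup_add_finrank_inf_eq (Submodule.span ℂ {v}) D
      rw [hDinf, hDsup, finrank_span_singleton hv0] at e1
      simp [finrank_bot] at e1
      omega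
    obtain ⟨C, hCD, hCrank⟩ := exists_le_finrank D (2 * m) hDrank
    obtain ⟨W', hW'C, hW'rank, hW'iso⟩ := ih C hCrank
    refine ⟨Submodule.span ℂ {v} ⊔ W', ?_, ?_, ?_⟩
    · refine sup_le ?_ ?_
      · rw [Submodule.span_le, Set.singleton_subset_iff]; exact hvV
      · exact le_trans hW'C (le_trans hCD (le_trans hDV₁ inf_le_left))
    · have hinf : Submodule.span ℂ {v} ⊓ W' = ⊥ := by
        rw [← le_bot_iff, ← hDinf]
        exact inf_le_inf_left _ (le_trans hW'C hCD)
      have e1 := Submodule.finrank_sup_add_finrank_inf_eq (Submodule.span ℂ {v}) W'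
      rw [hinf, finrank_span_singleton hv0, hW'rank] at e1
      simp [finrank_bot] at e1
      omega
    · intro x hx y hy
      rw [Submodule.mem_sup] at hx hy
      obtain ⟨a, ha, x', hx', rfl⟩ := hx
      obtain ⟨e, he, y', hy', rfl⟩ := hy
      rw [Submodule.mem_span_singleton] at ha he
      obtain ⟨t, rfl⟩ := ha
      obtain ⟨r, rfl⟩ := he
      have hmemker : ∀ z, z ∈ W' → v ⬝ᵥ A *ᵥ z = 0 := by
        intro z hz
        have : z ∈ LinearMap.ker φ :=
          (le_trans hW'C (le_trans hCD hDV₁) hz).2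
        simpa [hφdef] using this
      have hvy' : v ⬝ᵥ A *ᵥ y' = 0 := hmemker y' hy'
      have hvx' : v ⬝ᵥ A *ᵥ x' = 0 := hmemker x' hx'
      have hx'v : x' ⬝ᵥ A *ᵥ v = 0 := swap_zero hA hvx'
      have hx'y' : x' ⬝ᵥ A *ᵥ y' = 0 := hW'iso x' hx' y' hy'
      simp only [add_dotProduct, smul_dotProduct, dotProduct_add, dotProduct_smul,
        Matrix.mulVec_add, Matrix.mulVec_smul, smul_eq_mul]
      rw [hq0, hvy', hx'v, hx'y']
      ring

lemma iso {N : ℕ} : ∀ (s : ℕ) (Ms : Fin s → Matrix (Fin N) (Fin N) ℂ),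
    (∀ i, (Ms i)ᵀ = Ms i ∨ (Ms i)ᵀ = -(Ms i)) →
    ∀ (l : ℕ) (V : Submodule ℂ (Fin N → ℂ)), finrank ℂ V = 2 ^ s * l →
    ∃ W, W ≤ V ∧ finrank ℂ W = l ∧ ∀ i, ∀ x ∈ W, ∀ y ∈ W, x ⬝ᵥ Ms i *ᵥ y = 0 := by
  intro s
  induction s with
  | zero =>
    intro Ms _ l V hV
    exact ⟨V, le_rfl, by simpa using hV, fun i => i.elim0⟩
  | succ s ih =>
    intro Ms hMs l V hV
    obtain ⟨V', hV'V, hV'rank, hV'iso⟩ := iso1 (Ms (Fin.last s)) (hMs (Fin.last s))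
      (2 ^ s * l) V (by rw [hV, pow_succ]; ring)
    obtain ⟨W, hWV', hWrank, hWiso⟩ := ih (fun j => Ms j.castSucc)
      (fun j => hMs j.castSucc) l V' hV'rank
    refine ⟨W, le_trans hWV' hV'V, hWrank, ?_⟩
    intro i
    refine Fin.lastCases ?_ ?_ i
    · intro x hx y hy
      exact hV'iso x (hWV' hx) y (hWV' hy)
    · intro j x hx y hy
      exact hWiso j x hx y hy

lemma rep_unique {l x x' r r' : ℕ} (hr : r < l) (hr' : r' < l)
    (h : x * l + r = x' * l + r') : x = x' ∧ r = r' := by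
  rcases lt_trichotomy x x' with hlt | heq | hgt
  · exfalso
    have h1 : (x + 1) * l ≤ x' * l := Nat.mul_le_mul_right l hlt
    have h2 : (x + 1) * l = x * l + l := by ring
    omega
  · constructor
    · exact heq
    · subst heq; omega
  · exfalso
    have h1 : (x' + 1) * l ≤ x * l := Nat.mul_le_mul_right l hgt
    have h2 : (x' + 1) * l = x' * l + l := by ring
    omega

lemma congruence_entry {N : ℕ} (P B : Matrix (Fin N) (Fin N) ℂ) (a b : Fin N) :
    (P * B * Pᵀ) a b = (fun k => P a k) ⬝ᵥ B *ᵥ (fun k => P b k) := by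
  simp only [Matrix.mul_apply, Matrix.transpose_apply, Matrix.mulVec, dotProduct,
    Finset.sum_mul, Finset.mul_sum]
  rw [Finset.sum_comm]
  apply Finset.sum_congr rfl
  intro c _
  apply Finset.sum_congr rfl
  intro d _
  ring

/-- Let `M = (M₁,...,Mₛ)` be a tuple of `N × N` complex matrices, each
symmetric or skew-symmetric, and suppose there is a subspace `V ⊆ ℂᴺ` of
dimension `2ˢl` with `dim(M₁V + ... + MₛV) = s·2ˢl`.  Then there is an
invertible `g` such that for each `i` the first `l` columns of `g Mᵢ gᵀ` form
the block column `(0_l, δ_{1,i}Id_l, ..., δ_{s,i}Id_l, 0)` (block rows of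
heights `l,...,l` (`s+1` of them) and `N-(s+1)l`); in particular the
upper-left `l × l` block of each `g Mᵢ gᵀ` is zero. -/
theorem exists_congruence_normalizing_first_columns {N l s : ℕ}
    (hN : (s + 1) * l ≤ N) (M : Fin s → Matrix (Fin N) (Fin N) ℂ)
    (hM : ∀ i, (M i).IsSymm ∨ (M i)ᵀ = -(M i))
    (V : Submodule ℂ (Fin N → ℂ))
    (hV : Module.finrank ℂ V = 2 ^ s * l)
    (hMV : Module.finrank ℂ
        (⨆ i : Fin s, V.map (M i).mulVecLin : Submodule ℂ (Fin N → ℂ)) =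
      s * (2 ^ s * l)) :
    ∃ g : Matrix (Fin N) (Fin N) ℂ, IsUnit g ∧
      ∀ (i : Fin s) (a b : Fin N), (b : ℕ) < l →
        (g * M i * gᵀ) a b =
          if (a : ℕ) = ((i : ℕ) + 1) * l + (b : ℕ) then 1 else 0 := by
  have hsym : ∀ i, (M i)ᵀ = M i ∨ (M i)ᵀ = -(M i) := hM
  -- common isotropic subspace
  obtain ⟨W, hWV, hWrank, hWiso⟩ := iso s M hsym l V hV
  obtain ⟨w, hwind, hwW, hwspan⟩ := exists_fam W hWrank
  -- the image vectors
  set y : Fin s × Fin l → (Fin N → ℂ) := fun p => M p.1 *ᵥ w p.2 with hy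
  have hwy : ∀ (a : Fin l) (p : Fin s × Fin l), w a ⬝ᵥ y p = 0 :=
    fun a p => hWiso p.1 (w a) (hwW a) (w p.2) (hwW p.2)
  -- linear independence of y via injectivity of Φ
  have hyind : LinearIndependent ℂ y := by
    set Φ : (Fin s → ↥V) →ₗ[ℂ] (Fin N → ℂ) :=
      ∑ i : Fin s, ((M i).mulVecLin.comp (V.subtype.comp (LinearMap.proj i))) with hΦ
    have hΦapp : ∀ x : Fin s → ↥V, Φ x = ∑ i : Fin s, M i *ᵥ (x i : Fin N → ℂ) := by
      intro x
      rw [hΦ, LinearMap.sum_apply]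
      rfl
    have hrange : LinearMap.range Φ = ⨆ i : Fin s, V.map (M i).mulVecLin := by
      apply le_antisymm
      · rintro _ ⟨x, rfl⟩
        rw [hΦapp]
        apply Submodule.sum_mem
        intro i _
        apply Submodule.mem_iSup_of_mem i
        exact ⟨(x i : Fin N → ℂ), (x i).2, rfl⟩
      · rw [iSup_le_iff]
        intro i
        rintro _ ⟨z, hz, rfl⟩
        refine ⟨Pi.single i ⟨z, hz⟩, ?_⟩
        rw [hΦapp]
        rw [Finset.sum_eq_single i]
        · simp
        · intro j _ hj
          rw [Pi.single_eq_of_ne hj]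
          simp
        · simp
    have hdom : Module.finrank ℂ (Fin s → ↥V) = s * (2 ^ s * l) := by
      rw [Module.finrank_pi_fintype]
      simp [hV, Finset.sum_const, mul_comm]
    have hker : LinearMap.ker Φ = ⊥ := by
      have e1 := LinearMap.finrank_range_add_finrank_ker Φ
      rw [hrange, hMV, hdom] at e1
      have : Module.finrank ℂ (LinearMap.ker Φ) = 0 := by omega
      exact Submodule.finrank_eq_zero.1 this
    have hΦinj : Function.Injective Φ := LinearMap.ker_eq_bot.1 hker
    rw [Fintype.linearIndependent_iff]
    intro t ht p
    set x : Fin s → ↥V := fun i => ∑ b : Fin l, t (i, b) • (⟨w b, hWV (hwW b)⟩ : ↥V) with hx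
    have hΦx : Φ x = 0 := by
      rw [hΦapp]
      have : ∀ i, M i *ᵥ ((x i : Fin N → ℂ)) = ∑ b : Fin l, t (i, b) • y (i, b) := by
        intro i
        rw [hx]
        push_cast
        show (M i).mulVecLin (∑ b : Fin l, t (i, b) • w b) = _
        rw [map_sum]
        apply Finset.sum_congr rfl
        intro b _
        rw [LinearMap.map_smul]
        rfl
      rw [Finset.sum_congr rfl (fun i _ => this i)]
      exact Eq.trans (Fintype.sum_prod_type (f := fun p => t p • y p)).symm ht
    have hx0 : x = 0 := by
      apply hΦinj
      rw [hΦx, map_zero]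
    have hxi : ∀ i, (∑ b : Fin l, t (i, b) • w b) = 0 := by
      intro i
      have := congrFun hx0 i
      rw [hx] at this
      have h2 := congrArg (Subtype.val) this
      push_cast at h2
      simpa using h2
    have := Fintype.linearIndependent_iff.1 hwind (fun b => t (p.1, b)) (hxi p.1) p.2
    simpa using this
  -- the pairing map F
  set A : Matrix (Fin s × Fin l) (Fin N) ℂ := Matrix.of (fun p k => y p k) with hA
  set F : (Fin N → ℂ) →ₗ[ℂ] (Fin s × Fin l → ℂ) := A.mulVecLin with hF
  have hFapp : ∀ x p, F x p = x ⬝ᵥ y p := by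
    intro x p
    simp [hF, hA, Matrix.mulVecLin, Matrix.mulVec, dotProduct, mul_comm]
  -- F is surjective
  have hAT : ∀ c : Fin s × Fin l → ℂ, Aᵀ.mulVecLin c = ∑ p : Fin s × Fin l, c p • y p := by
    intro c
    funext k
    simp only [Matrix.mulVecLin_apply, Matrix.mulVec, Matrix.transpose_apply, dotProduct,
      Finset.sum_apply, Pi.smul_apply, smul_eq_mul, hA, Matrix.of_apply]
    apply Finset.sum_congr rfl
    intro p _
    ring
  have hATinj : Function.Injective Aᵀ.mulVecLin := by
    rw [← LinearMap.ker_eq_bot]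
    rw [eq_bot_iff]
    intro c hc
    have hc0 : ∑ p : Fin s × Fin l, c p • y p = 0 := by
      rw [← hAT]; exact hc
    have := Fintype.linearIndependent_iff.1 hyind c hc0
    exact Submodule.mem_bot _ |>.2 (funext this)
  have hrankA : A.rank = s * l := by
    rw [← Matrix.rank_transpose, Matrix.rank, LinearMap.finrank_range_of_inj hATinj]
    simp [Module.finrank_pi]
  have hFsurj : Function.Surjective F := by
    rw [← LinearMap.range_eq_top]
    apply Submodule.eq_top_of_finrank_eq
    have : Module.finrank ℂ (LinearMap.range F) = A.rank := rfl
    rw [this, hrankA]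
    simp [Module.finrank_pi]
  -- kernel of F
  set K : Submodule ℂ (Fin N → ℂ) := LinearMap.ker F with hK
  have hKrank : s * l + Module.finrank ℂ K = N := by
    have e1 := LinearMap.finrank_range_add_finrank_ker F
    have e2 : LinearMap.range F = ⊤ := LinearMap.range_eq_top.2 hFsurj
    rw [e2] at e1
    have e3 : Module.finrank ℂ (⊤ : Submodule ℂ (Fin s × Fin l → ℂ)) = s * l := by
      simp [Module.finrank_pi]
    have e4 : Module.finrank ℂ (Fin N → ℂ) = N := by simp
    rw [e3, e4] at e1
    exact e1
  have hWK : W ≤ K := by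
    rw [← hwspan, Submodule.span_le]
    rintro _ ⟨a, rfl⟩
    rw [hK, SetLike.mem_coe, LinearMap.mem_ker]
    funext p
    rw [hFapp]
    exact hwy a p
  obtain ⟨C, hCK, hWCinf, hWCsup⟩ := exists_compl_within hWK
  have hCrank : Module.finrank ℂ C = N - (s + 1) * l := by
    have e1 := Submodule.finrank_sup_add_finrank_inf_eq W C
    rw [hWCinf, hWCsup, hWrank] at e1
    simp only [finrank_bot, add_zero] at e1
    have e2 : (s + 1) * l = s * l + l := by ring
    omega
  obtain ⟨c, hcind, hcC, hcspan⟩ := exists_fam C hCrank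
  have hcker : ∀ j, F (c j) = 0 := fun j => LinearMap.mem_ker.1 (hCK (hcC j))
  -- dual vectors
  have hexu : ∀ p : Fin s × Fin l, ∃ z, F z = Pi.single p 1 := fun p => hFsurj _
  choose u hu using hexu
  have huy : ∀ p q, u p ⬝ᵥ y q = if q = p then 1 else 0 := by
    intro p q
    rw [← hFapp, hu, Pi.single_apply]
  -- the rows
  have hll : ∀ a : ℕ, ¬ a < l → a < (s + 1) * l → 0 < l := by
    intro a h1 h2
    rcases Nat.eq_zero_or_pos l with h0 | h0
    · subst h0; simp at h2
    · exact h0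
  set v : Fin N → (Fin N → ℂ) := fun a =>
    if h : (a : ℕ) < l then w ⟨(a : ℕ), h⟩
    else if h2 : (a : ℕ) < (s + 1) * l then
      u (⟨(a : ℕ) / l - 1, by
            have hl := hll a h h2
            have d1 : (a : ℕ) / l < s + 1 := (Nat.div_lt_iff_lt_mul hl).2 (by
              rw [mul_comm] at h2 ⊢; exact h2)
            have d2 : 1 ≤ (a : ℕ) / l := (Nat.one_le_div_iff hl).2 (le_of_not_gt h)
            omega⟩,
          ⟨(a : ℕ) % l, Nat.mod_lt _ (hll a h h2)⟩)
    else c ⟨(a : ℕ) - (s + 1) * l, by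
      have := a.isLt
      omega⟩ with hv
  -- key pairing property
  have hvpair : ∀ (a : Fin N) (p : Fin s × Fin l),
      v a ⬝ᵥ y p = if (a : ℕ) = ((p.1 : ℕ) + 1) * l + (p.2 : ℕ) then 1 else 0 := by
    intro a p
    by_cases h : (a : ℕ) < l
    · rw [hv]
      simp only []
      rw [dif_pos h, hwy]
      have h1 : l ≤ ((p.1 : ℕ) + 1) * l := Nat.le_mul_of_pos_left l (Nat.succ_pos _)
      rw [if_neg (by omega)]
    · by_cases h2 : (a : ℕ) < (s + 1) * l
      · rw [hv]
        simp only []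
        rw [dif_neg h, dif_pos h2, huy]
        have hl := hll a h h2
        have d2 : 1 ≤ (a : ℕ) / l := (Nat.one_le_div_iff hl).2 (le_of_not_gt h)
        have hdiv : (a : ℕ) = ((a : ℕ) / l - 1 + 1) * l + (a : ℕ) % l := by
          have e : ((a : ℕ) / l - 1 + 1) = (a : ℕ) / l := by omega
          rw [e, Nat.mul_comm]
          exact (Nat.div_add_mod _ _).symm
        split_ifs with h3 h4 h4
        · rfl
        · exfalso
          apply h4
          rw [h3]
          exact hdiv
        · exfalso
          apply h3
          have h5 : ((p.1 : ℕ) + 1) * l + (p.2 : ℕ)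
              = ((a : ℕ) / l - 1 + 1) * l + (a : ℕ) % l := by omega
          obtain ⟨e1, e2⟩ := rep_unique p.2.isLt (Nat.mod_lt _ hl) h5
          refine Prod.ext (Fin.ext ?_) (Fin.ext ?_)
          · simp only []
            omega
          · simp only []
            omega
        · rfl
      · rw [hv]
        simp only []
        rw [dif_neg h, dif_neg h2]
        have hz := congrFun (hcker ⟨(a : ℕ) - (s + 1) * l, by have := a.isLt; omega⟩) p
        rw [hFapp] at hz
        rw [hz]
        have h1 : ((p.1 : ℕ) + 1) * l + (p.2 : ℕ) < (s + 1) * l := by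
          have h3 : (p.1 : ℕ) + 2 ≤ s + 1 := by have := p.1.isLt; omega
          have h4 : ((p.1 : ℕ) + 2) * l ≤ (s + 1) * l := Nat.mul_le_mul_right l h3
          have h5 : ((p.1 : ℕ) + 2) * l = ((p.1 : ℕ) + 1) * l + l := by ring
          have := p.2.isLt
          omega
        rw [if_neg (by omega)]
        rfl
  -- range membership lemmas
  have hlep : l ≤ (s + 1) * l := Nat.le_mul_of_pos_left l (Nat.succ_pos _)
  have hw_range : ∀ (a : Fin l), ∃ k : Fin N, v k = w a := by
    intro a
    refine ⟨⟨(a : ℕ), by have := a.isLt; omega⟩, ?_⟩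
    rw [hv]
    simp only []
    rw [dif_pos (show ((a : ℕ)) < l from a.isLt)]
  have hkap : ∀ p : Fin s × Fin l, ((p.1 : ℕ) + 1) * l + (p.2 : ℕ) < (s + 1) * l := by
    intro p
    have h3 : (p.1 : ℕ) + 2 ≤ s + 1 := by have := p.1.isLt; omega
    have h4 : ((p.1 : ℕ) + 2) * l ≤ (s + 1) * l := Nat.mul_le_mul_right l h3
    have h5 : ((p.1 : ℕ) + 2) * l = ((p.1 : ℕ) + 1) * l + l := by ring
    have := p.2.isLt
    omega
  have hu_range : ∀ p : Fin s × Fin l, ∃ k : Fin N, v k = u p := by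
    intro p
    have hl : 0 < l := lt_of_le_of_lt (Nat.zero_le _) p.2.isLt
    have hlp : l ≤ ((p.1 : ℕ) + 1) * l := Nat.le_mul_of_pos_left l (Nat.succ_pos _)
    have hd1 : (((p.1 : ℕ) + 1) * l + (p.2 : ℕ)) / l = (p.1 : ℕ) + 1 := by
      rw [Nat.mul_comm, Nat.mul_add_div hl, Nat.div_eq_of_lt p.2.isLt, add_zero]
    have hd2 : (((p.1 : ℕ) + 1) * l + (p.2 : ℕ)) % l = (p.2 : ℕ) := by
      rw [Nat.mul_comm, Nat.mul_add_mod, Nat.mod_eq_of_lt p.2.isLt]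
    refine ⟨⟨((p.1 : ℕ) + 1) * l + (p.2 : ℕ), by have := hkap p; omega⟩, ?_⟩
    rw [hv]
    simp only []
    rw [dif_neg (show ¬ (((p.1 : ℕ) + 1) * l + (p.2 : ℕ) < l) by omega),
      dif_pos (hkap p)]
    refine congrArg u (Prod.ext (Fin.ext ?_) (Fin.ext ?_))
    · show (((p.1 : ℕ) + 1) * l + (p.2 : ℕ)) / l - 1 = (p.1 : ℕ)
      rw [hd1]
      omega
    · show (((p.1 : ℕ) + 1) * l + (p.2 : ℕ)) % l = (p.2 : ℕ)
      rw [hd2]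
  have hc_range : ∀ j : Fin (N - (s + 1) * l), ∃ k : Fin N, v k = c j := by
    intro j
    refine ⟨⟨(s + 1) * l + (j : ℕ), by have := j.isLt; omega⟩, ?_⟩
    rw [hv]
    simp only []
    rw [dif_neg (show ¬ ((s + 1) * l + (j : ℕ) < l) by omega),
      dif_neg (show ¬ ((s + 1) * l + (j : ℕ) < (s + 1) * l) by omega)]
    refine congrArg c (Fin.ext ?_)
    show (s + 1) * l + (j : ℕ) - (s + 1) * l = (j : ℕ)
    omega
  -- spanning
  have hspan : ∀ x : Fin N → ℂ, x ∈ Submodule.span ℂ (Set.range v) := by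
    have hKle : K ≤ Submodule.span ℂ (Set.range v) := by
      rw [← hWCsup]
      apply sup_le
      · rw [← hwspan, Submodule.span_le]
        rintro _ ⟨a, rfl⟩
        obtain ⟨k, hk⟩ := hw_range a
        exact hk ▸ Submodule.subset_span ⟨k, rfl⟩
      · rw [← hcspan, Submodule.span_le]
        rintro _ ⟨j, rfl⟩
        obtain ⟨k, hk⟩ := hc_range j
        exact hk ▸ Submodule.subset_span ⟨k, rfl⟩
    intro x
    have hx1 : x - ∑ p : Fin s × Fin l, (F x p) • u p ∈ K := by
      rw [hK, LinearMap.mem_ker, map_sub, map_sum]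
      simp only [_root_.map_smul, hu]
      have hss : (∑ p : Fin s × Fin l, (F x p) • (Pi.single p 1 : Fin s × Fin l → ℂ)) = F x := by
        funext q
        rw [Finset.sum_apply]
        simp only [Pi.smul_apply, Pi.single_apply, smul_eq_mul, mul_ite, mul_one, mul_zero]
        simp
      rw [hss, sub_self]
    have hx2 : (∑ p : Fin s × Fin l, (F x p) • u p) ∈ Submodule.span ℂ (Set.range v) := by
      apply Submodule.sum_mem
      intro p _
      apply Submodule.smul_mem
      obtain ⟨k, hk⟩ := hu_range p
      exact hk ▸ Submodule.subset_span ⟨k, rfl⟩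
    have := Submodule.add_mem _ (hKle hx1) hx2
    simpa using this
  -- the matrix g and its inverse
  set g : Matrix (Fin N) (Fin N) ℂ := Matrix.of v with hg
  have hexcf : ∀ a : Fin N, ∃ cf : Fin N → ℂ, ∑ k, cf k • v k = Pi.single a 1 := by
    intro a
    exact (Submodule.mem_span_range_iff_exists_fun ℂ).1 (hspan _)
  choose cf hcf using hexcf
  set h : Matrix (Fin N) (Fin N) ℂ := Matrix.of cf with hh
  have hhg : h * g = 1 := by
    ext a b
    rw [Matrix.mul_apply]
    have h2 : ∑ k, cf a k * v k b = (Pi.single a 1 : Fin N → ℂ) b := by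
      have := congrFun (hcf a) b
      rw [Finset.sum_apply] at this
      simpa using this
    show ∑ k, cf a k * v k b = (1 : Matrix (Fin N) (Fin N) ℂ) a b
    rw [h2, Pi.single_apply, Matrix.one_apply]
    by_cases hab : b = a
    · subst hab; simp
    · rw [if_neg hab, if_neg (fun hq => hab hq.symm)]
  have hgh : g * h = 1 := mul_eq_one_comm.mp hhg
  refine ⟨g, ⟨⟨g, h, hgh, hhg⟩, rfl⟩, ?_⟩
  intro i a b hb
  rw [congruence_entry]
  show v a ⬝ᵥ M i *ᵥ v b = _
  have hvb : v b = w ⟨(b : ℕ), hb⟩ := by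
    rw [hv]
    simp only []
    rw [dif_pos hb]
  rw [hvb]
  have := hvpair a (i, ⟨(b : ℕ), hb⟩)
  simpa using this
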